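/- arXiv:2601.21578 — 6 statements merged into one kernel-verified Lean document; each statement's English description precedes it below -/
import Mathlib

section
/- Let T(x) be the unique formal power series with T(0) = 0 satisfying the functional equation T = x + T²/2 + (1/2)((1/(1-T))² - 1)T + (3/2)(1/(1-T))²(T/(1-T))((1/(1-T))² - 1)T + (1/(1-T))⁴((1/(1-T))² - 1)T² + (1/4)(1/(1-T))²((1/(1-T))² - 1)²T². Then the first coefficients of T are: [x¹]T = 1, [x²]T = 3/2, [x³]T = 11, [x⁴]T = 745/8, [x⁵]T = 3333/4. -/
open PowerSeries

set_option maxHeartbeats 2000000 in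
/-- If `T` is a formal power series over `ℚ` with `T(0) = 0` satisfying the
functional equation of level-2 tree-child networks, then its first coefficients
are `1, 3/2, 11, 745/8, 3333/4`. -/
theorem level2_treechild_egf_first_coeffs (T : PowerSeries ℚ)
    (h0 : constantCoeff T = 0)
    (heq : T = X + C (1/2 : ℚ) * T ^ 2
        + C (1/2 : ℚ) * (((1 - T)⁻¹) ^ 2 - 1) * T
        + C (3/2 : ℚ) * ((1 - T)⁻¹) ^ 2 * (T * (1 - T)⁻¹) * (((1 - T)⁻¹) ^ 2 - 1) * T
        + ((1 - T)⁻¹) ^ 4 * (((1 - T)⁻¹) ^ 2 - 1) * T ^ 2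
        + C (1/4 : ℚ) * ((1 - T)⁻¹) ^ 2 * (((1 - T)⁻¹) ^ 2 - 1) ^ 2 * T ^ 2) :
    coeff 1 T = 1 ∧ coeff 2 T = 3/2 ∧ coeff 3 T = 11 ∧
      coeff 4 T = 745/8 ∧ coeff 5 T = 3333/4 := by
  set U := (1 - T)⁻¹ with hUdef
  have hc : constantCoeff (1 - T) ≠ 0 := by simp [h0]
  have hU : (1 - T) * U = 1 := PowerSeries.mul_inv_cancel _ hc
  have hu0 : coeff 0 U = 1 := by
    rw [coeff_zero_eq_constantCoeff, hUdef, constantCoeff_inv]; simp [h0]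
  have h01 : coeff 0 T = 0 := by rwa [coeff_zero_eq_constantCoeff]
  have ha1 : coeff 1 T = 1 := by
    have := congrArg (coeff 1) heq
    simp only [pow_succ, pow_zero, one_mul, map_add, map_sub, coeff_mul,
      Finset.Nat.sum_antidiagonal_eq_sum_range_succ_mk, Finset.sum_range_succ,
      Finset.sum_range_zero, coeff_one, coeff_X, coeff_C, h01, hu0] at this
    norm_num at this; exact this
  have hu1 : coeff 1 U = 1 := by
    have := congrArg (coeff 1) hU
    simp only [map_sub, coeff_mul, Finset.Nat.sum_antidiagonal_eq_sum_range_succ_mk,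
      Finset.sum_range_succ, Finset.sum_range_zero, coeff_one, h01, ha1, hu0] at this
    norm_num at this; linarith
  have ha2 : coeff 2 T = 3/2 := by
    have := congrArg (coeff 2) heq
    simp only [pow_succ, pow_zero, one_mul, map_add, map_sub, coeff_mul,
      Finset.Nat.sum_antidiagonal_eq_sum_range_succ_mk, Finset.sum_range_succ,
      Finset.sum_range_zero, coeff_one, coeff_X, coeff_C, h01, ha1, hu0, hu1] at this
    norm_num at this; linarith
  have hu2 : coeff 2 U = 5/2 := by
    have := congrArg (coeff 2) hU
    simp only [map_sub, coeff_mul, Finset.Nat.sum_antidiagonal_eq_sum_range_succ_mk,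
      Finset.sum_range_succ, Finset.sum_range_zero, coeff_one, h01, ha1, ha2, hu0, hu1] at this
    norm_num at this; linarith
  have ha3 : coeff 3 T = 11 := by
    have := congrArg (coeff 3) heq
    simp only [pow_succ, pow_zero, one_mul, map_add, map_sub, coeff_mul,
      Finset.Nat.sum_antidiagonal_eq_sum_range_succ_mk, Finset.sum_range_succ,
      Finset.sum_range_zero, coeff_one, coeff_X, coeff_C, h01, ha1, ha2, hu0, hu1, hu2] at this
    norm_num at this; linarith
  have hu3 : coeff 3 U = 15 := by
    have := congrArg (coeff 3) hU
    simp only [map_sub, coeff_mul, Finset.Nat.sum_antidiagonal_eq_sum_range_succ_mk,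
      Finset.sum_range_succ, Finset.sum_range_zero, coeff_one, h01, ha1, ha2, ha3, hu0, hu1, hu2] at this
    norm_num at this; linarith
  have ha4 : coeff 4 T = 745/8 := by
    have := congrArg (coeff 4) heq
    simp only [pow_succ, pow_zero, one_mul, map_add, map_sub, coeff_mul,
      Finset.Nat.sum_antidiagonal_eq_sum_range_succ_mk, Finset.sum_range_succ,
      Finset.sum_range_zero, coeff_one, coeff_X, coeff_C, h01, ha1, ha2, ha3, hu0, hu1, hu2, hu3] at this
    norm_num at this; linarith
  have hu4 : coeff 4 U = 983/8 := by
    have := congrArg (coeff 4) hU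
    simp only [map_sub, coeff_mul, Finset.Nat.sum_antidiagonal_eq_sum_range_succ_mk,
      Finset.sum_range_succ, Finset.sum_range_zero, coeff_one, h01, ha1, ha2, ha3, ha4, hu0, hu1, hu2, hu3] at this
    norm_num at this; linarith
  have ha5 : coeff 5 T = 3333/4 := by
    have := congrArg (coeff 5) heq
    simp only [pow_succ, pow_zero, one_mul, map_add, map_sub, coeff_mul,
      Finset.Nat.sum_antidiagonal_eq_sum_range_succ_mk, Finset.sum_range_succ,
      Finset.sum_range_zero, coeff_one, coeff_X, coeff_C, h01, ha1, ha2, ha3, ha4,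
      hu0, hu1, hu2, hu3, hu4] at this
    norm_num at this; linarith
  exact ⟨ha1, ha2, ha3, ha4, ha5⟩
end

section
/- If C(z) = Σ_{n≥1} cₙ zⁿ is a formal power series with c₀ = 0 satisfying C(z) = z·φ(C(z)) for a formal power series φ with φ(0) ≠ 0, then for every n ≥ 1, [zⁿ]C(z) = (1/n)·[z^{n-1}] φ(z)ⁿ. -/
open PowerSeries

/-- Composition `φ(C)` of formal power series over `ℚ`, well-defined when `C` has
zero constant term: the `n`-th coefficient is `Σ_{k=0}^{n} [z^k]φ · [z^n](C^k)`. -/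
noncomputable def psComp (φ C : PowerSeries ℚ) : PowerSeries ℚ :=
  PowerSeries.mk fun n =>
    ∑ k ∈ Finset.range (n + 1), coeff k φ * coeff n (C ^ k)

namespace LagrangeAux

lemma coeff_psComp (f g : PowerSeries ℚ) (n : ℕ) :
    coeff n (psComp f g) = ∑ k ∈ Finset.range (n + 1), coeff k f * coeff n (g ^ k) := by
  simp [psComp]

lemma coeff_pow_eq_zero {g : PowerSeries ℚ} (hg : constantCoeff g = 0) {j k : ℕ} (h : j < k) :
    coeff j (g ^ k) = 0 :=
  X_pow_dvd_iff.mp (pow_dvd_pow_of_dvd (X_dvd_iff.mpr hg) k) j h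

lemma dvd_eval₂ {g : PowerSeries ℚ} (hg : constantCoeff g = 0) (M : ℕ) (P : Polynomial ℚ)
    (hP : ∀ k < M, P.coeff k = 0) :
    (X : PowerSeries ℚ) ^ M ∣ Polynomial.eval₂ (PowerSeries.C) g P := by
  rw [Polynomial.eval₂_eq_sum_range]
  apply Finset.dvd_sum
  intro i _
  by_cases h : i < M
  · rw [hP i h]; simp
  · push_neg at h
    exact Dvd.dvd.mul_left
      (dvd_trans (pow_dvd_pow X h) (pow_dvd_pow_of_dvd (X_dvd_iff.mpr hg) i)) _

lemma dvd_psComp_sub {g : PowerSeries ℚ} (hg : constantCoeff g = 0) (f : PowerSeries ℚ)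
    (M : ℕ) :
    (X : PowerSeries ℚ) ^ M ∣ psComp f g - Polynomial.eval₂ (PowerSeries.C) g (trunc M f) := by
  rw [X_pow_dvd_iff]
  intro j hj
  rw [map_sub, eval₂_trunc_eq_sum_range, coeff_psComp, sub_eq_zero, map_sum]
  simp only [coeff_C_mul]
  apply Finset.sum_subset
  · intro x hx
    rw [Finset.mem_range] at *
    omega
  · intro x _ hx
    rw [Finset.mem_range, not_lt] at hx
    rw [coeff_pow_eq_zero hg (by omega), mul_zero]

lemma dvd_pow_psComp {g : PowerSeries ℚ} (hg : constantCoeff g = 0) (f : PowerSeries ℚ)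
    (M a : ℕ) :
    (X : PowerSeries ℚ) ^ M ∣ (psComp f g) ^ a - psComp (f ^ a) g := by
  have h2 := dvd_psComp_sub hg (f ^ a) M
  have h3 : (X : PowerSeries ℚ) ^ M ∣
      (psComp f g) ^ a - (Polynomial.eval₂ (PowerSeries.C) g (trunc M f)) ^ a :=
    dvd_trans (dvd_psComp_sub hg f M) (sub_dvd_pow_sub_pow _ _ a)
  have h4 : (Polynomial.eval₂ (PowerSeries.C) g (trunc M f)) ^ a
      = Polynomial.eval₂ (PowerSeries.C) g ((trunc M f) ^ a) :=
    (Polynomial.eval₂_pow _ _ _).symm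
  have h5 : (X : PowerSeries ℚ) ^ M ∣
      Polynomial.eval₂ (PowerSeries.C) g ((trunc M f) ^ a)
        - Polynomial.eval₂ (PowerSeries.C) g (trunc M (f ^ a)) := by
    rw [← Polynomial.eval₂_sub]
    apply dvd_eval₂ hg
    intro k hk
    rw [Polynomial.coeff_sub, sub_eq_zero]
    have e1 : ((trunc M f) ^ a).coeff k
        = coeff k (((trunc M f : PowerSeries ℚ)) ^ a) := by
      rw [← Polynomial.coe_pow, Polynomial.coeff_coe]
    have e2 := coeff_coe_trunc_of_lt (f := ((trunc M f : PowerSeries ℚ)) ^ a) hk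
    rw [trunc_trunc_pow] at e2
    have e3 := coeff_coe_trunc_of_lt (f := f ^ a) hk
    rw [e1, ← e2, e3, coeff_trunc, if_pos hk]
  calc (X : PowerSeries ℚ) ^ M ∣
      ((psComp f g) ^ a - (Polynomial.eval₂ (PowerSeries.C) g (trunc M f)) ^ a)
      + (Polynomial.eval₂ (PowerSeries.C) g ((trunc M f) ^ a)
          - Polynomial.eval₂ (PowerSeries.C) g (trunc M (f ^ a)))
      - (psComp (f ^ a) g - Polynomial.eval₂ (PowerSeries.C) g (trunc M (f ^ a))) :=
        dvd_sub (dvd_add h3 h5) h2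
    _ = (psComp f g) ^ a - psComp (f ^ a) g := by rw [h4]; ring

end LagrangeAux

open LagrangeAux

/-- Lagrange inversion formula: if `C(z) = z·φ(C(z))` with `C(0) = 0` and
`φ(0) ≠ 0`, then `[zⁿ]C = (1/n)·[z^{n-1}] φⁿ` for all `n ≥ 1`. -/
theorem lagrange_inversion (C φ : PowerSeries ℚ)
    (hC0 : constantCoeff C = 0) (hφ0 : constantCoeff φ ≠ 0)
    (heq : C = X * psComp φ C) :
    ∀ n : ℕ, 1 ≤ n → coeff n C = (1 / (n : ℚ)) * coeff (n - 1) (φ ^ n) := by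
  intro n hn
  set ψ := psComp φ C with hψdef
  have hψ0 : constantCoeff ψ = constantCoeff φ := by
    have := coeff_psComp φ C 0
    simp only [← coeff_zero_eq_constantCoeff_apply]
    simpa using this
  have hψne : constantCoeff ψ ≠ 0 := by rw [hψ0]; exact hφ0
  have hv : ψ * ψ⁻¹ = 1 := PowerSeries.mul_inv_cancel ψ hψne
  set v : PowerSeries ℚ := ψ⁻¹ with hvdef
  have hdC : (d⁄dX ℚ) C = ψ + X * (d⁄dX ℚ) ψ := by
    rw [heq, Derivation.leibniz, derivative_X, smul_eq_mul, smul_eq_mul, mul_one, add_comm]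
  -- the key residue computation
  have key : ∀ p : ℕ, 1 ≤ p →
      coeff (p - 1) ((d⁄dX ℚ) C * v ^ p) = if p = 1 then 1 else 0 := by
    intro p hp
    have hψv : ψ * v ^ p = v ^ (p - 1) := by
      obtain ⟨q, rfl⟩ : ∃ q, p = q + 1 := ⟨p - 1, by omega⟩
      rw [pow_succ, ← mul_assoc, mul_comm ψ, mul_assoc, hv, mul_one, Nat.add_sub_cancel]
    have hsplit : (d⁄dX ℚ) C * v ^ p = v ^ (p - 1) + X * ((d⁄dX ℚ) ψ * v ^ p) := by
      rw [hdC, add_mul, hψv]; ring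
    rcases eq_or_lt_of_le hp with h1 | h2
    · subst h1
      rw [if_pos rfl, show (1:ℕ) - 1 = 0 from rfl] at *
      rw [hsplit, map_add, pow_zero]
      simp
    · rw [if_neg (by omega)]
      obtain ⟨q, rfl⟩ : ∃ q, p = q + 2 := ⟨p - 2, by omega⟩
      have hq1 : q + 2 - 1 = q + 1 := rfl
      rw [hq1] at hsplit ⊢
      rw [hsplit, map_add, coeff_succ_X_mul]
      have e : (d⁄dX ℚ) (v ^ (q + 1))
          = (-1 - (q : ℚ)) • ((d⁄dX ℚ) ψ * v ^ (q + 2)) := by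
        rw [Derivation.leibniz_pow, derivative_inv', Nat.add_sub_cancel]
        rw [PowerSeries.smul_eq_C_mul, smul_eq_mul, nsmul_eq_mul]
        push_cast
        simp only [map_sub, map_neg, map_one, map_natCast]
        ring
      have e2 : coeff q ((d⁄dX ℚ) (v ^ (q + 1)))
          = coeff (q + 1) (v ^ (q + 1)) * ((q : ℚ) + 1) := by
        rw [coeff_derivative]
      rw [e, map_smul, smul_eq_mul] at e2
      have hqne : ((q : ℚ) + 1) ≠ 0 := by positivity
      have e3 : coeff q ((d⁄dX ℚ) ψ * v ^ (q + 2))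
          = -coeff (q + 1) (v ^ (q + 1)) := by
        apply mul_right_cancel₀ hqne
        linear_combination -e2
      rw [e3]; ring
  -- main computation
  obtain ⟨m, rfl⟩ : ∃ m, n = m + 1 := ⟨n - 1, by omega⟩
  have hm1 : m + 1 - 1 = m := rfl
  rw [hm1]
  set n := m + 1 with hndef
  have h1 : (n : ℚ) * coeff n C = coeff m ((d⁄dX ℚ) C) := by
    rw [coeff_derivative, hndef]; push_cast; ring
  have hS : (X : PowerSeries ℚ) ^ n ∣ ψ ^ n
      - Polynomial.eval₂ (PowerSeries.C) C (trunc n (φ ^ n)) := by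
    have hA := dvd_pow_psComp hC0 φ n n
    have hB := dvd_psComp_sub hC0 (φ ^ n) n
    have := dvd_add hA hB
    rwa [sub_add_sub_cancel] at this
  have h2 : coeff m ((d⁄dX ℚ) C)
      = coeff m ((d⁄dX ℚ) C * v ^ n
          * Polynomial.eval₂ (PowerSeries.C) C (trunc n (φ ^ n))) := by
    have hone : ψ ^ n * v ^ n = 1 := by rw [← mul_pow, hv, one_pow]
    have base : (d⁄dX ℚ) C = (d⁄dX ℚ) C * v ^ n * ψ ^ n := by
      rw [mul_assoc, mul_comm (v ^ n), hone, mul_one]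
    have hdvd : (X : PowerSeries ℚ) ^ n ∣
        (d⁄dX ℚ) C * v ^ n * ψ ^ n
          - (d⁄dX ℚ) C * v ^ n * Polynomial.eval₂ (PowerSeries.C) C (trunc n (φ ^ n)) := by
      rw [← mul_sub]
      exact Dvd.dvd.mul_left hS _
    have := X_pow_dvd_iff.mp hdvd m (by omega)
    rw [map_sub, sub_eq_zero] at this
    conv_lhs => rw [base]
    exact this
  rw [eval₂_trunc_eq_sum_range] at h2
  have h3 : coeff m ((d⁄dX ℚ) C * v ^ n * ∑ i ∈ Finset.range n,
        PowerSeries.C (coeff i (φ ^ n)) * C ^ i)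
      = ∑ i ∈ Finset.range n, coeff i (φ ^ n) * coeff m ((d⁄dX ℚ) C * v ^ n * C ^ i) := by
    rw [Finset.mul_sum, map_sum]
    apply Finset.sum_congr rfl
    intro i _
    rw [show (d⁄dX ℚ) C * v ^ n * (PowerSeries.C (coeff i (φ ^ n)) * C ^ i)
        = PowerSeries.C (coeff i (φ ^ n)) * ((d⁄dX ℚ) C * v ^ n * C ^ i) by ring,
      coeff_C_mul]
  have h4 : ∀ i ∈ Finset.range n,
      coeff m ((d⁄dX ℚ) C * v ^ n * C ^ i) = if i = m then 1 else 0 := by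
    intro i hi
    rw [Finset.mem_range] at hi
    have hsp : (d⁄dX ℚ) C * v ^ n * C ^ i = X ^ i * ((d⁄dX ℚ) C * v ^ (n - i)) := by
      have hvn : v ^ n = v ^ (n - i) * v ^ i := by rw [← pow_add]; congr 1; omega
      have hCi : C ^ i = X ^ i * ψ ^ i := by rw [heq, mul_pow]
      have hvi : v ^ i * ψ ^ i = 1 := by rw [← mul_pow, mul_comm, hv, one_pow]
      calc (d⁄dX ℚ) C * v ^ n * C ^ i
          = X ^ i * ((d⁄dX ℚ) C * v ^ (n - i)) * (v ^ i * ψ ^ i) := by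
            rw [hvn, hCi]; ring
        _ = X ^ i * ((d⁄dX ℚ) C * v ^ (n - i)) := by rw [hvi, mul_one]
    have hm' : m = (m - i) + i := by omega
    have key' := key (n - i) (by omega)
    rw [show n - i - 1 = m - i by omega] at key'
    rw [hsp]
    rw [show coeff m (X ^ i * ((d⁄dX ℚ) C * v ^ (n - i)))
        = coeff (m - i) ((d⁄dX ℚ) C * v ^ (n - i)) from by
      conv_lhs => rw [hm']
      exact coeff_X_pow_mul _ _ _]
    rw [key']
    rcases eq_or_ne i m with h | h
    · rw [if_pos (show n - i = 1 by omega), if_pos h]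
    · rw [if_neg (show n - i ≠ 1 by omega), if_neg h]
  have h6 : (∑ i ∈ Finset.range n, coeff i (φ ^ n) * coeff m ((d⁄dX ℚ) C * v ^ n * C ^ i))
      = ∑ i ∈ Finset.range n, coeff i (φ ^ n) * if i = m then (1:ℚ) else 0 :=
    Finset.sum_congr rfl (fun i hi => by rw [h4 i hi])
  have h5 : (∑ i ∈ Finset.range n, coeff i (φ ^ n) * if i = m then (1:ℚ) else 0)
      = coeff m (φ ^ n) := by
    rw [Finset.sum_eq_single m]
    · simp
    · intro b _ hb; rw [if_neg hb, mul_zero]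
    · intro h; exact absurd (Finset.mem_range.mpr (by omega)) h
  have hfinal : (n : ℚ) * coeff n C = coeff m (φ ^ n) := by
    rw [h1, h2, h3, h6, h5]
  have hnne : (n : ℚ) ≠ 0 := by positivity
  have : coeff n C = (1 / (n : ℚ)) * ((n : ℚ) * coeff n C) := by
    field_simp
  rw [this, hfinal]
end

section
/- Let T be the unique formal power series with T(0) = 0 satisfying T = x·φ(T) where φ(z) = -4(z-1)⁶/(2z⁷ - 18z⁶ + 67z⁵ - 126z⁴ + 124z³ - 70z² + 30z - 4). Then for all n ≥ 1, n!·[xⁿ]T ≥ 0, i.e., the coefficients tₙ = n!·[xⁿ]T are nonnegative. -/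
open PowerSeries

noncomputable section

namespace TC2Aux

/-- Explicit nonnegative coefficients of `E = 1 - 1/φ`. -/
def e (n : ℕ) : ℚ :=
  if n = 0 then 0 else if n = 1 then 3/2
  else ((n:ℚ)^5 + 16*n^4 + 47*n^3 - 28*n^2 + 12*n + 48) / 96

lemma e_ge2 {n : ℕ} (h : 2 ≤ n) :
    e n = ((n:ℚ)^5 + 16*n^4 + 47*n^3 - 28*n^2 + 12*n + 48) / 96 := by
  unfold e
  rw [if_neg (by omega), if_neg (by omega)]

lemma e_nonneg (n : ℕ) : 0 ≤ e n := by
  unfold e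
  split_ifs with h0 h1
  · norm_num
  · norm_num
  · have h2 : (2:ℚ) ≤ (n:ℚ) := by exact_mod_cast (by omega : 2 ≤ n)
    have h0' : (0:ℚ) ≤ (n:ℚ) := by positivity
    nlinarith [pow_nonneg h0' 3, pow_nonneg h0' 4, pow_nonneg h0' 5]

def A : PowerSeries ℚ := PowerSeries.mk e

lemma coeff_A (n : ℕ) : coeff n A = e n := coeff_mk _ _

lemma mulR4 : (4 : PowerSeries ℚ) * (A * (1 - X)^6)
    = 6*X - 10*X^2 + 44*X^3 - 66*X^4 + 43*X^5 - 14*X^6 + 2*X^7 := by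
  have expand : (4 : PowerSeries ℚ) * (A * (1 - X)^6)
      = 4*A - 24*(A*X^1) + 60*(A*X^2) - 80*(A*X^3) + 60*(A*X^4) - 24*(A*X^5)
        + 4*(A*X^6) := by ring
  ext n
  rw [expand]
  simp only [show (4:PowerSeries ℚ) = C 4 from (map_ofNat _ _).symm,
    show (24:PowerSeries ℚ) = C 24 from (map_ofNat _ _).symm,
    show (60:PowerSeries ℚ) = C 60 from (map_ofNat _ _).symm,
    show (80:PowerSeries ℚ) = C 80 from (map_ofNat _ _).symm,
    show (6:PowerSeries ℚ) = C 6 from (map_ofNat _ _).symm,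
    show (10:PowerSeries ℚ) = C 10 from (map_ofNat _ _).symm,
    show (44:PowerSeries ℚ) = C 44 from (map_ofNat _ _).symm,
    show (66:PowerSeries ℚ) = C 66 from (map_ofNat _ _).symm,
    show (43:PowerSeries ℚ) = C 43 from (map_ofNat _ _).symm,
    show (14:PowerSeries ℚ) = C 14 from (map_ofNat _ _).symm,
    show (2:PowerSeries ℚ) = C 2 from (map_ofNat _ _).symm,
    map_add, map_sub, coeff_C_mul, coeff_mul_X_pow', coeff_A, coeff_X,
    coeff_X_pow, coeff_C]
  by_cases hn : n < 8
  · interval_cases n <;> norm_num [e]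
  · obtain ⟨m, rfl⟩ : ∃ m, n = m + 8 := ⟨n - 8, by omega⟩
    simp only [coeff_C,
      if_pos (show (1:ℕ) ≤ m + 8 by omega), if_pos (show (2:ℕ) ≤ m + 8 by omega),
      if_pos (show (3:ℕ) ≤ m + 8 by omega), if_pos (show (4:ℕ) ≤ m + 8 by omega),
      if_pos (show (5:ℕ) ≤ m + 8 by omega), if_pos (show (6:ℕ) ≤ m + 8 by omega),
      if_pos (show (7:ℕ) ≤ m + 8 by omega),
      if_neg (show ¬ m + 8 = 1 by omega), if_neg (show ¬ m + 8 = 2 by omega),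
      if_neg (show ¬ m + 8 = 3 by omega), if_neg (show ¬ m + 8 = 4 by omega),
      if_neg (show ¬ m + 8 = 5 by omega), if_neg (show ¬ m + 8 = 6 by omega),
      if_neg (show ¬ m + 8 = 7 by omega),
      if_neg (show ¬ m + 8 - 1 = 0 by omega), if_neg (show ¬ m + 8 - 2 = 0 by omega),
      if_neg (show ¬ m + 8 - 3 = 0 by omega), if_neg (show ¬ m + 8 - 4 = 0 by omega),
      if_neg (show ¬ m + 8 - 5 = 0 by omega), if_neg (show ¬ m + 8 - 6 = 0 by omega),
      if_neg (show ¬ m + 8 - 7 = 0 by omega),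
      show m + 8 - 1 = m + 7 from by omega, show m + 8 - 2 = m + 6 from by omega,
      show m + 8 - 3 = m + 5 from by omega, show m + 8 - 4 = m + 4 from by omega,
      show m + 8 - 5 = m + 3 from by omega, show m + 8 - 6 = m + 2 from by omega,
      show m + 8 - 7 = m + 1 from by omega]
    rw [e_ge2 (show 2 ≤ m + 8 by omega), e_ge2 (show 2 ≤ m + 7 by omega),
      e_ge2 (show 2 ≤ m + 6 by omega), e_ge2 (show 2 ≤ m + 5 by omega),
      e_ge2 (show 2 ≤ m + 4 by omega), e_ge2 (show 2 ≤ m + 3 by omega),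
      e_ge2 (show 2 ≤ m + 2 by omega)]
    push_cast
    ring

def Dpoly : PowerSeries ℚ :=
  2*X^7 - 18*X^6 + 67*X^5 - 126*X^4 + 124*X^3 - 70*X^2 + 30*X - 4

def phi : PowerSeries ℚ := (-4 * (X - 1) ^ 6) * Dpoly⁻¹

lemma hprod : (1 - A) * (-4 * (X - 1)^6) = Dpoly := by
  unfold Dpoly
  linear_combination mulR4

lemma constD : constantCoeff Dpoly = -4 := by
  unfold Dpoly
  simp [map_ofNat]

lemma phi_one_sub_A : phi * (1 - A) = 1 := by
  have h : phi * (1 - A) = Dpoly⁻¹ * ((1 - A) * (-4 * (X - 1)^6)) := by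
    unfold phi; ring
  rw [h, hprod]
  exact PowerSeries.inv_mul_cancel _ (by rw [constD]; norm_num)

lemma phi_eq : phi = 1 + phi * A := by linear_combination phi_one_sub_A

lemma phi_nonneg : ∀ n, 0 ≤ coeff n phi := by
  intro n
  induction n using Nat.strong_induction_on with
  | _ n ih =>
    have h : coeff n phi
        = coeff n (1 : PowerSeries ℚ)
          + ∑ p ∈ Finset.HasAntidiagonal.antidiagonal n, coeff p.1 phi * coeff p.2 A := by
      conv_lhs => rw [phi_eq]
      rw [map_add, coeff_mul]
    rw [h]
    apply add_nonneg
    · rw [coeff_one]; split_ifs <;> norm_num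
    · apply Finset.sum_nonneg
      intro p hp
      rcases Nat.eq_zero_or_pos p.2 with h2 | h2
      · have hA0 : coeff p.2 A = 0 := by rw [h2, coeff_A]; simp [e]
        rw [hA0, mul_zero]
      · have hi : p.1 < n := by
          have := Finset.HasAntidiagonal.mem_antidiagonal.mp hp; omega
        exact mul_nonneg (ih _ hi) (by rw [coeff_A]; exact e_nonneg _)

lemma pow_coeff_nonneg (T : PowerSeries ℚ) (M : ℕ)
    (h : ∀ m, m ≤ M → 0 ≤ coeff m T) :
    ∀ k, ∀ m, m ≤ M → 0 ≤ coeff m (T ^ k) := by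
  intro k
  induction k with
  | zero =>
    intro m _
    rw [pow_zero, coeff_one]
    split_ifs <;> norm_num
  | succ k ih =>
    intro m hm
    rw [pow_succ, coeff_mul]
    apply Finset.sum_nonneg
    intro p hp
    have hmem := Finset.HasAntidiagonal.mem_antidiagonal.mp hp
    exact mul_nonneg (ih p.1 (by omega)) (h p.2 (by omega))

end TC2Aux

end

open TC2Aux in
/-- If `T` is the formal power series with `T(0) = 0` satisfying `T = x·φ(T)` where
`φ(z) = -4(z-1)⁶/(2z⁷ - 18z⁶ + 67z⁵ - 126z⁴ + 124z³ - 70z² + 30z - 4)`, then all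
coefficients `tₙ = n!·[xⁿ]T` are nonnegative. -/
theorem level2_treechild_coeffs_nonneg (T : PowerSeries ℚ)
    (h0 : constantCoeff T = 0)
    (heq : T = X * psComp ((-4 * (X - 1) ^ 6) *
      (2*X^7 - 18*X^6 + 67*X^5 - 126*X^4 + 124*X^3 - 70*X^2 + 30*X - 4)⁻¹) T) :
    ∀ n : ℕ, 1 ≤ n → 0 ≤ (Nat.factorial n : ℚ) * coeff n T := by
  have heq' : T = X * psComp phi T := heq
  have hT : ∀ n, 0 ≤ coeff n T := by
    intro n
    induction n using Nat.strong_induction_on with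
    | _ n ih =>
      rcases n with _ | m
      · rw [coeff_zero_eq_constantCoeff, h0]
      · conv_rhs => rw [heq']
        rw [coeff_succ_X_mul]
        show (0:ℚ) ≤ coeff m (PowerSeries.mk _)
        rw [coeff_mk]
        apply Finset.sum_nonneg
        intro k _
        exact mul_nonneg (phi_nonneg k)
          (pow_coeff_nonneg T m (fun m' hm' => ih m' (by omega)) k m le_rfl)
  intro n _
  exact mul_nonneg (by positivity) (hT n)
end

section
/- Let φ(z) = -4(z-1)⁶/(2z⁷ - 18z⁶ + 67z⁵ - 126z⁴ + 124z³ - 70z² + 30z - 4) and let ρ ≈ 0.0787573489 satisfy 0.078 < ρ < 0.079 with ρ = τ/φ(τ) for the root τ ∈ (0.122, 0.123) of φ(z) = zφ'(z). Then the growth rate γ = 1/(ρe) satisfies 4.67 < γ < 4.68. -/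
set_option maxHeartbeats 1000000 in
/-- If `ρ = τ/φ(τ)` for the root `τ ∈ (0.122, 0.123)` of `φ(z) = z·φ'(z)`, with
`φ(z) = -4(z-1)⁶/(2z⁷ - 18z⁶ + 67z⁵ - 126z⁴ + 124z³ - 70z² + 30z - 4)`, and
`0.078 < ρ < 0.079`, then the growth rate `γ = 1/(ρe)` satisfies `4.67 < γ < 4.68`. -/
theorem growth_rate_bounds (φ : ℝ → ℝ)
    (hφ : ∀ z : ℝ, φ z = (-4*(z-1)^6) /
      (2*z^7 - 18*z^6 + 67*z^5 - 126*z^4 + 124*z^3 - 70*z^2 + 30*z - 4))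
    (τ ρ : ℝ) (hτ : τ ∈ Set.Ioo (0.122 : ℝ) 0.123)
    (hroot : φ τ = τ * deriv φ τ)
    (hρdef : ρ = τ / φ τ)
    (hρ : 0.078 < ρ ∧ ρ < 0.079) :
    4.67 < 1 / (ρ * Real.exp 1) ∧ 1 / (ρ * Real.exp 1) < 4.68 := by
  obtain ⟨ht1, ht2⟩ := hτ
  set Q : ℝ := 2*τ^7 - 18*τ^6 + 67*τ^5 - 126*τ^4 + 124*τ^3 - 70*τ^2 + 30*τ - 4 with hQdef
  have ht0 : (0:ℝ) < τ := by linarith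
  -- bounds on s = τ - 0.1225
  have hs1 : τ - 0.1225 ≤ 0.0005 := by linarith
  have hs1' : -(0.0005:ℝ) ≤ τ - 0.1225 := by linarith
  have hs2l : (0:ℝ) ≤ (τ - 0.1225)^2 := sq_nonneg _
  have hs2 : (τ - 0.1225)^2 ≤ 0.00000025 := by nlinarith
  have hs3 : (τ - 0.1225)^3 ≤ 0.000000000125 := by
    nlinarith [mul_nonneg (show (0:ℝ) ≤ 0.0005 - (τ - 0.1225) by linarith) hs2l]
  have hs3' : -(0.000000000125:ℝ) ≤ (τ - 0.1225)^3 := by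
    nlinarith [mul_nonneg (show (0:ℝ) ≤ (τ - 0.1225) + 0.0005 by linarith) hs2l]
  have hs4l : (0:ℝ) ≤ (τ - 0.1225)^4 := by positivity
  have hs4 : (τ - 0.1225)^4 ≤ 0.0000000000000625 := by
    nlinarith [mul_nonneg (show (0:ℝ) ≤ 0.00000025 - (τ-0.1225)^2 by linarith) hs2l]
  have hs5 : (τ - 0.1225)^5 ≤ 0.00000000000000003125 := by
    nlinarith [mul_nonneg (show (0:ℝ) ≤ 0.0005 - (τ - 0.1225) by linarith) hs4l, hs4]
  have hs5' : -(0.00000000000000003125:ℝ) ≤ (τ - 0.1225)^5 := by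
    nlinarith [mul_nonneg (show (0:ℝ) ≤ (τ - 0.1225) + 0.0005 by linarith) hs4l, hs4]
  have hs6l : (0:ℝ) ≤ (τ - 0.1225)^6 := by positivity
  have hs6 : (τ - 0.1225)^6 ≤ 0.000000000000000000015625 := by
    nlinarith [mul_nonneg (show (0:ℝ) ≤ 0.000000000125 - (τ-0.1225)^3 by linarith)
      (show (0:ℝ) ≤ (τ-0.1225)^3 + 0.000000000125 by linarith)]
  have hs7 : (τ - 0.1225)^7 ≤ 0.0000000000000000000000078125 := by
    nlinarith [mul_nonneg (show (0:ℝ) ≤ 0.0005 - (τ - 0.1225) by linarith) hs6l, hs6]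
  have hs7' : -(0.0000000000000000000000078125:ℝ) ≤ (τ - 0.1225)^7 := by
    nlinarith [mul_nonneg (show (0:ℝ) ≤ (τ - 0.1225) + 0.0005 by linarith) hs6l, hs6]
  have hs8l : (0:ℝ) ≤ (τ - 0.1225)^8 := by positivity
  have hs8 : (τ - 0.1225)^8 ≤ 0.00000000000000000000000000390625 := by
    nlinarith [mul_nonneg (show (0:ℝ) ≤ 0.0000000000000625 - (τ-0.1225)^4 by linarith) hs4l, hs4]
  have hQneg : Q < 0 := by
    rw [hQdef]
    nlinarith [hs2, hs2l, hs3, hs3', hs4, hs4l, hs5, hs5', hs6, hs6l, hs7, hs7', hs8, hs8l]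
  have hQne : Q ≠ 0 := ne_of_lt hQneg
  have hpow : (0:ℝ) < (1-τ)^6 := pow_pos (by linarith) 6
  have hA : (-4*(τ-1)^6) ≠ 0 := by
    have h : (τ-1)^6 = (1-τ)^6 := by ring
    have : -4*(τ-1)^6 < 0 := by rw [h]; nlinarith
    exact ne_of_lt this
  have hρ2 : ρ = τ * Q / (-4*(τ-1)^6) := by
    rw [hρdef, hφ τ, ← hQdef, div_div_eq_mul_div]
  have heq : ρ * (-4*(τ-1)^6) = τ * Q := by
    rw [hρ2, div_mul_cancel₀ _ hA]
  have h4pos : (0:ℝ) < 4*(1-τ)^6 := by linarith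
  have hρform : ρ = -(τ*Q) / (4*(1-τ)^6) := by
    rw [eq_div_iff (ne_of_gt h4pos)]
    linear_combination -heq
  have hρlb : (0.07875 : ℝ) < ρ := by
    rw [hρform, lt_div_iff₀ h4pos, hQdef]
    nlinarith [hs2, hs2l, hs3, hs3', hs4, hs4l, hs5, hs5', hs6, hs6l, hs7, hs7', hs8, hs8l]
  have hρub : ρ < (0.07876 : ℝ) := by
    rw [hρform, div_lt_iff₀ h4pos, hQdef]
    nlinarith [hs2, hs2l, hs3, hs3', hs4, hs4l, hs5, hs5', hs6, hs6l, hs7, hs7', hs8, hs8l]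
  have he1 : Real.exp 1 < 2.7182818286 := Real.exp_one_lt_d9
  have he2 : (2.7182818283 : ℝ) < Real.exp 1 := Real.exp_one_gt_d9
  have hepos : (0:ℝ) < Real.exp 1 := Real.exp_pos 1
  have hρpos : (0:ℝ) < ρ := by linarith
  have hprod : (0:ℝ) < ρ * Real.exp 1 := mul_pos hρpos hepos
  clear hs1 hs1' hs2l hs2 hs3 hs3' hs4l hs4 hs5 hs5' hs6l hs6 hs7 hs7' hs8l hs8
  clear hQneg hQne hpow hA hρ2 heq h4pos hρform hρdef hroot hφ hρ ht1 ht2 ht0 hQdef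
  constructor
  · rw [lt_div_iff₀ hprod]
    nlinarith [mul_pos (show (0:ℝ) < 0.07876 - ρ by linarith)
      (show (0:ℝ) < 2.7182818286 - Real.exp 1 by linarith)]
  · rw [div_lt_iff₀ hprod]
    nlinarith [mul_pos (show (0:ℝ) < ρ - 0.07875 by linarith)
      (show (0:ℝ) < Real.exp 1 - 2.7182818283 by linarith)]
end

section
/- Let φ(z) = -4(z-1)⁶/(2z⁷ - 18z⁶ + 67z⁵ - 126z⁴ + 124z³ - 70z² + 30z - 4) and let τ ∈ (0.122, 0.123) satisfy φ(τ) = τ·φ'(τ). Then φ''(τ) > 0 and the constant c = sqrt(φ(τ)/φ''(τ)) satisfies 0.066 < c < 0.067. -/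
noncomputable def pf (z : ℝ) : ℝ := -4*(z-1)^6
noncomputable def qf (z : ℝ) : ℝ :=
  2*z^7 - 18*z^6 + 67*z^5 - 126*z^4 + 124*z^3 - 70*z^2 + 30*z - 4
noncomputable def pf1 (z : ℝ) : ℝ := -24*(z-1)^5
noncomputable def qf1 (z : ℝ) : ℝ :=
  14*z^6 - 108*z^5 + 335*z^4 - 504*z^3 + 372*z^2 - 140*z + 30
noncomputable def pf2 (z : ℝ) : ℝ := -120*(z-1)^4
noncomputable def qf2 (z : ℝ) : ℝ :=
  84*z^5 - 540*z^4 + 1340*z^3 - 1512*z^2 + 744*z - 140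
noncomputable def Af (z : ℝ) : ℝ := pf1 z * qf z - pf z * qf1 z
noncomputable def Af1 (z : ℝ) : ℝ := pf2 z * qf z - pf z * qf2 z
noncomputable def Bf (z : ℝ) : ℝ := Af1 z * qf z - 2 * Af z * qf1 z
noncomputable def Gf (z : ℝ) : ℝ := pf z * qf z - z * Af z

lemma hd_pf (x : ℝ) : HasDerivAt pf (pf1 x) x :=
  ((((hasDerivAt_id x).sub_const 1).pow 6).const_mul (-4 : ℝ)).congr_deriv
    (by simp [pf1]; ring)

lemma hd_pf1 (x : ℝ) : HasDerivAt pf1 (pf2 x) x :=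
  ((((hasDerivAt_id x).sub_const 1).pow 5).const_mul (-24 : ℝ)).congr_deriv
    (by simp [pf2]; ring)

lemma hd_qf (x : ℝ) : HasDerivAt qf (qf1 x) x := by
  have h7 := hasDerivAt_pow 7 x
  have h6 := hasDerivAt_pow 6 x
  have h5 := hasDerivAt_pow 5 x
  have h4 := hasDerivAt_pow 4 x
  have h3 := hasDerivAt_pow 3 x
  have h2 := hasDerivAt_pow 2 x
  have h1 := hasDerivAt_id x
  exact ((((((((h7.const_mul (2:ℝ)).sub (h6.const_mul 18)).add
      (h5.const_mul 67)).sub (h4.const_mul 126)).add (h3.const_mul 124)).sub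
      (h2.const_mul 70)).add (h1.const_mul 30)).sub_const 4).congr_deriv
    (by simp [qf1]; push_cast; ring)

lemma hd_qf1 (x : ℝ) : HasDerivAt qf1 (qf2 x) x := by
  have h6 := hasDerivAt_pow 6 x
  have h5 := hasDerivAt_pow 5 x
  have h4 := hasDerivAt_pow 4 x
  have h3 := hasDerivAt_pow 3 x
  have h2 := hasDerivAt_pow 2 x
  have h1 := hasDerivAt_id x
  exact (((((((h6.const_mul (14:ℝ)).sub (h5.const_mul 108)).add
      (h4.const_mul 335)).sub (h3.const_mul 504)).add (h2.const_mul 372)).sub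
      (h1.const_mul 140)).add_const 30).congr_deriv
    (by simp [qf2]; push_cast; ring)

lemma hd_Af (x : ℝ) : HasDerivAt Af (Af1 x) x :=
  (((hd_pf1 x).mul (hd_qf x)).sub ((hd_pf x).mul (hd_qf1 x))).congr_deriv
    (by simp [Af1, Af, pf, pf1, pf2, qf, qf1, qf2]; ring)

lemma u_pow_le {u c : ℝ} (hu : 0 < u) (huc : u ≤ c) (k : ℕ) :
    u^(k+1) ≤ c^k * u := by
  have := pow_le_pow_left₀ hu.le huc k
  calc u^(k+1) = u^k * u := by ring
  _ ≤ c^k * u := by nlinarith [pow_nonneg hu.le k]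

lemma le_u_pow {u c : ℝ} (hc : 0 ≤ c) (hcu : c ≤ u) (k : ℕ) :
    c^k * u ≤ u^(k+1) := by
  have hu : 0 ≤ u := le_trans hc hcu
  have := pow_le_pow_left₀ hc hcu k
  calc c^k * u ≤ u^k * u := by nlinarith
  _ = u^(k+1) := by ring

lemma qf_neg {x : ℝ} (h1 : 0.12 < x) (h2 : x < 0.13) : qf x < 0 := by
  have hx : 0 < x := by linarith
  have hu := fun k => u_pow_le hx h2.le k
  have hl := fun k => le_u_pow (by norm_num : (0:ℝ) ≤ 0.12) h1.le k
  simp only [qf]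
  linarith [hu 1, hu 2, hu 3, hu 4, hu 5, hu 6,
    hl 1, hl 2, hl 3, hl 4, hl 5, hl 6]

lemma Bf_exp (u : ℝ) : Bf (0.122 + u) =
    ((-67285555418838158526408890518825235888552584993881 : ℝ)/119209289550781250000000000000000000000000000000) + ((376334900807679165854881958442363510478199530911 : ℝ)/119209289550781250000000000000000000000000000) * u + ((-5166365213648571133196362057447698206486799033 : ℝ)/476837158203125000000000000000000000000000) * u^2 + ((804306381117771819728524670371317031222299 : ℝ)/59604644775390625000000000000000000000) * u^3 + ((4338467510080216122629268008159553547527 : ℝ)/95367431640625000000000000000000000) * u^4 + ((-86336096864879880919927009016730190251 : ℝ)/476837158203125000000000000000000) * u^5 + ((321520459060033617827760964858313239 : ℝ)/1907348632812500000000000000000) * u^6 + ((283328414996803259170623614761521 : ℝ)/953674316406250000000000000) * u^7 + ((-16655878831677126134317160607279 : ℝ)/15258789062500000000000000) * u^8 + ((5021497817397099983949327729 : ℝ)/3051757812500000000000) * u^9 + ((-96358064059630423076424999 : ℝ)/61035156250000000000) * u^10 + ((16332751301701502286981 : ℝ)/15258789062500000) * u^11 + ((-65815858080519836401 : ℝ)/122070312500000)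 * u^12 + ((25759983714451629 : ℝ)/122070312500) * u^13 + ((-6588650102673 : ℝ)/97656250) * u^14 + ((35107893752 : ℝ)/1953125) * u^15 + ((-58222626 : ℝ)/15625) * u^16 + ((63216 : ℝ)/125) * u^17 + (-32 : ℝ) * u^18 := by
  simp only [Bf, Af1, Af, pf, pf1, pf2, qf, qf1, qf2]; ring

lemma Gf_exp (u : ℝ) : Gf (0.122 + u) =
    ((283360371147305349926875869509169 : ℝ)/7629394531250000000000000000000000) + ((-905162269568802175905625894517173 : ℝ)/15258789062500000000000000000000) * u + ((5615806645871027928336392914971 : ℝ)/15258789062500000000000000000) * u^2 + ((-37478412230716816529025019443 : ℝ)/30517578125000000000000000) * u^3 + ((82903565995553704426746087 : ℝ)/24414062500000000000000) * u^4 + ((-1928549333360171131234647 : ℝ)/244140625000000000000) * u^5 + ((1657481577957563986241 : ℝ)/122070312500000000) * u^6 + ((-3987036594441814369 : ℝ)/244140625000000) * u^7 + ((26898538443301863 : ℝ)/1953125000000) * u^8 + ((-6459992598263 : ℝ)/781250000) * u^9 + ((13844644467 : ℝ)/3906250) * u^10 + ((-16349238 : ℝ)/15625) * u^11 + ((23828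 : ℝ)/125) * u^12 + (-16 : ℝ) * u^13 := by
  simp only [Gf, Af, pf, pf1, qf, qf1]; ring

lemma Up_exp (u : ℝ) : pf (0.122 + u) * qf (0.122 + u)^2 - 0.004489 * Bf (0.122 + u) =
    ((-3598861920870012246338455458793323610017343417234593 : ℝ)/119209289550781250000000000000000000000000000000000000) + ((9501374233277959070228037012861994050109847814493701 : ℝ)/119209289550781250000000000000000000000000000000000) * u + ((-592210386735335844497606739082912714598165681051643 : ℝ)/476837158203125000000000000000000000000000000000) * u^2 + ((1068805666283985179783684744457697736684466199593 : ℝ)/119209289550781250000000000000000000000000000) * u^3 + ((-1571076692689370939721238832222984660153962843 : ℝ)/38146972656250000000000000000000000000000) * u^4 + ((65902765761405840599085183680674154575280463 : ℝ)/476837158203125000000000000000000000000) * u^5 + ((-693529030587162965082198110168070436584451 : ℝ)/1907348632812500000000000000000000000) * u^6 + ((741374910412116928621112810238951894341 : ℝ)/953674316406250000000000000000000) * u^7 + ((-20986357445781683331152602121093696939 : ℝ)/15258789062500000000000000000000) * u^8 + ((6192525920519887423975207474387963 : ℝ)/3051757812500000000000000000) * u^9 + ((-30449308808946206530248700586769 :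 ℝ)/12207031250000000000000000) * u^10 + ((9668381336691653650117566249 : ℝ)/3814697265625000000000) * u^11 + ((-16039257728649621866671981 : ℝ)/7629394531250000000) * u^12 + ((171289119938456257006439 : ℝ)/122070312500000000) * u^13 + ((-72462530616905990539 : ℝ)/97656250000000) * u^14 + ((74545138774561071 : ℝ)/244140625000) * u^15 + ((-746133226879233 : ℝ)/7812500000) * u^16 + ((171344497621 : ℝ)/7812500) * u^17 + ((-109093491 : ℝ)/31250) * u^18 + ((8624 : ℝ)/25) * u^19 + (-16 : ℝ) * u^20 := by
  simp only [Bf, Af1, Af, pf, pf1, pf2, qf, qf1, qf2]; ring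

lemma Lo_exp (u : ℝ) : pf (0.122 + u) * qf (0.122 + u)^2 - 0.004356 * Bf (0.122 + u) =
    ((-6273920395787743665175418948898539991597418610710383 : ℝ)/59604644775390625000000000000000000000000000000000000) + ((298482086721418137477710509791713387406357761003277 : ℝ)/3725290298461914062500000000000000000000000000000) * u + ((-74112189163593888057290231904569157307453553165379 : ℝ)/59604644775390625000000000000000000000000000000) * u^2 + ((1069019611781362507087732532020016507014771331127 : ℝ)/119209289550781250000000000000000000000000000) * u^3 + ((-7854229431089173361117574775824752859526172033 : ℝ)/190734863281250000000000000000000000000000) * u^4 + ((1647282076513070289373070834711873236499427 : ℝ)/11920928955078125000000000000000000000) * u^5 + ((-43342891772881748788189188622484017557729 : ℝ)/119209289550781250000000000000000000) * u^6 + ((370706296545655751727291251589857588317 : ℝ)/476837158203125000000000000000000) * u^7 + ((-10494286338833148194464233151727232523 : ℝ)/7629394531250000000000000000000) * u^8 + ((77414922246620015478413409187199 : ℝ)/38146972656250000000000000) * u^9 + ((-19032419958406370437189083432339 : ℝ)/7629394531250000000000000) * u^10 + ((38675697602689740900274433469 : ℝ)/15258789062500000000000) * u^11 + ((-256636877167518659004993029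 : ℝ)/122070312500000000000) * u^12 + ((21411568252036284884137 : ℝ)/15258789062500000) * u^13 + ((-2264481465855301439 : ℝ)/3051757812500) * u^14 + ((37272861221647349 : ℝ)/122070312500) * u^15 + ((-373068549341931 : ℝ)/3906250000) * u^16 + ((42836255776 : ℝ)/1953125) * u^17 + ((-54546812 : ℝ)/15625) * u^18 + ((8624 : ℝ)/25) * u^19 + (-16 : ℝ) * u^20 := by
  simp only [Bf, Af1, Af, pf, pf1, pf2, qf, qf1, qf2]; ring

lemma Bf_neg {u : ℝ} (h1 : 0 < u) (h2 : u < 0.001) : Bf (0.122 + u) < 0 := by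
  have hu := fun k => u_pow_le h1 h2.le k
  rw [Bf_exp]
  linarith [hu 1, hu 2, hu 3, hu 4, hu 5, hu 6, hu 7, hu 8, hu 9, hu 10, hu 11, hu 12, hu 13, hu 14, hu 15, hu 16, hu 17, pow_pos h1 2, pow_pos h1 3, pow_pos h1 4, pow_pos h1 5, pow_pos h1 6, pow_pos h1 7, pow_pos h1 8, pow_pos h1 9, pow_pos h1 10, pow_pos h1 11, pow_pos h1 12, pow_pos h1 13, pow_pos h1 14, pow_pos h1 15, pow_pos h1 16, pow_pos h1 17, pow_pos h1 18]

lemma Gf_pos {u : ℝ} (h1 : 0 < u) (h2 : u ≤ 0.0005) : 0 < Gf (0.122 + u) := by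
  have hu := fun k => u_pow_le h1 h2 k
  rw [Gf_exp]
  linarith [hu 1, hu 2, hu 3, hu 4, hu 5, hu 6, hu 7, hu 8, hu 9, hu 10, hu 11, hu 12, pow_pos h1 2, pow_pos h1 3, pow_pos h1 4, pow_pos h1 5, pow_pos h1 6, pow_pos h1 7, pow_pos h1 8, pow_pos h1 9, pow_pos h1 10, pow_pos h1 11, pow_pos h1 12, pow_pos h1 13]

lemma Up_pos {u : ℝ} (h0 : 0.0005 < u) (h2 : u < 0.001) :
    0 < pf (0.122 + u) * qf (0.122 + u)^2 - 0.004489 * Bf (0.122 + u) := by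
  have h1 : 0 < u := by linarith
  have hu := fun k => u_pow_le h1 h2.le k
  have hl := fun k => le_u_pow (by norm_num : (0:ℝ) ≤ 0.0005) h0.le k
  rw [Up_exp]
  linarith [hu 1, hu 2, hu 3, hu 4, hu 5, hu 6, hu 7, hu 8, hu 9, hu 10, hu 11, hu 12, hu 13, hu 14, hu 15, hu 16, hu 17, hu 18, hu 19, hl 1, hl 2, hl 3, hl 4, hl 5, hl 6, hl 7, hl 8, hl 9, hl 10, hl 11, hl 12, hl 13, hl 14, hl 15, hl 16, hl 17, hl 18, hl 19]

lemma Lo_neg {u : ℝ} (h1 : 0 < u) (h2 : u < 0.001) :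
    pf (0.122 + u) * qf (0.122 + u)^2 - 0.004356 * Bf (0.122 + u) < 0 := by
  have hu := fun k => u_pow_le h1 h2.le k
  rw [Lo_exp]
  linarith [hu 1, hu 2, hu 3, hu 4, hu 5, hu 6, hu 7, hu 8, hu 9, hu 10, hu 11, hu 12, hu 13, hu 14, hu 15, hu 16, hu 17, hu 18, hu 19, pow_pos h1 2, pow_pos h1 3, pow_pos h1 4, pow_pos h1 5, pow_pos h1 6, pow_pos h1 7, pow_pos h1 8, pow_pos h1 9, pow_pos h1 10, pow_pos h1 11, pow_pos h1 12, pow_pos h1 13, pow_pos h1 14, pow_pos h1 15, pow_pos h1 16, pow_pos h1 17, pow_pos h1 18, pow_pos h1 19, pow_pos h1 20]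

/-- If `τ ∈ (0.122, 0.123)` satisfies `φ(τ) = τ·φ'(τ)` for
`φ(z) = -4(z-1)⁶/(2z⁷ - 18z⁶ + 67z⁵ - 126z⁴ + 124z³ - 70z² + 30z - 4)`, then
`φ''(τ) > 0` and the constant `c = √(φ(τ)/φ''(τ))` satisfies `0.066 < c < 0.067`. -/
theorem leading_constant_bounds (φ : ℝ → ℝ)
    (hφ : ∀ z : ℝ, φ z = (-4*(z-1)^6) /
      (2*z^7 - 18*z^6 + 67*z^5 - 126*z^4 + 124*z^3 - 70*z^2 + 30*z - 4))
    (τ : ℝ) (hτ : τ ∈ Set.Ioo (0.122 : ℝ) 0.123)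
    (hroot : φ τ = τ * deriv φ τ) :
    0 < deriv (deriv φ) τ ∧
      0.066 < Real.sqrt (φ τ / deriv (deriv φ) τ) ∧
      Real.sqrt (φ τ / deriv (deriv φ) τ) < 0.067 := by
  obtain ⟨ht1, ht2⟩ := hτ
  -- φ = pf / qf
  have hφe : φ = fun z => pf z / qf z := by
    funext z; rw [hφ]; rfl
  have hΩ : τ ∈ Set.Ioo (0.12 : ℝ) 0.13 := ⟨by linarith, by linarith⟩
  -- first derivative on Ioo 0.12 0.13
  have hder1 : ∀ x ∈ Set.Ioo (0.12 : ℝ) 0.13,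
      HasDerivAt φ (Af x / (qf x)^2) x := by
    intro x hx
    have hqx : qf x ≠ 0 := (qf_neg hx.1 hx.2).ne
    have h := (hd_pf x).div (hd_qf x) hqx
    rw [hφe]
    exact h
  have hqτ : qf τ < 0 := qf_neg hΩ.1 hΩ.2
  have hqτ' : qf τ ≠ 0 := hqτ.ne
  -- deriv φ agrees with the rational function near τ
  have heq : deriv φ =ᶠ[nhds τ] (fun x => Af x / (qf x)^2) := by
    filter_upwards [isOpen_Ioo.mem_nhds hΩ] with x hx
    exact (hder1 x hx).deriv
  have hd1 : deriv φ τ = Af τ / (qf τ)^2 := (hder1 τ hΩ).deriv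
  -- second derivative
  have hder2 : HasDerivAt (fun x => Af x / (qf x)^2) (Bf τ / (qf τ)^3) τ := by
    have hq2 : (qf τ)^2 ≠ 0 := pow_ne_zero 2 hqτ'
    have h : HasDerivAt (fun x => Af x / (qf x)^2) _ τ := (hd_Af τ).fun_div ((hd_qf τ).fun_pow 2) hq2
    convert h using 1
    simp only [Bf]
    field_simp
    ring
  have hd2 : deriv (deriv φ) τ = Bf τ / (qf τ)^3 := by
    rw [heq.deriv_eq]
    exact hder2.deriv
  have hφτ : φ τ = pf τ / qf τ := by rw [hφe]
  -- the root equation gives Gf τ = 0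
  have hG : Gf τ = 0 := by
    rw [hφτ, hd1] at hroot
    have h2 : pf τ * qf τ = τ * Af τ := by
      field_simp at hroot
      nlinarith [sq_nonneg (qf τ), hroot]
    simp only [Gf]; linarith
  -- pass to u = τ - 0.122
  obtain ⟨u, hu0, hu1, rfl⟩ :
      ∃ u : ℝ, 0 < u ∧ u < 0.001 ∧ τ = 0.122 + u :=
    ⟨τ - 0.122, by linarith, by linarith, by ring⟩
  have hB : Bf (0.122 + u) < 0 := Bf_neg hu0 hu1
  have hq : qf (0.122 + u) < 0 := hqτ
  -- τ > 0.1225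
  have hu5 : 0.0005 < u := by
    by_contra h
    push_neg at h
    exact (Gf_pos hu0 h).ne' hG
  have hq3 : (qf (0.122 + u))^3 < 0 := by nlinarith [mul_pos_of_neg_of_neg hq hq]
  have hpp : 0 < deriv (deriv φ) (0.122 + u) := by
    rw [hd2]
    exact div_pos_of_neg_of_neg hB hq3
  have hr : φ (0.122 + u) / deriv (deriv φ) (0.122 + u) =
      pf (0.122 + u) * qf (0.122 + u)^2 / Bf (0.122 + u) := by
    rw [hφτ, hd2]
    field_simp [hqτ', hB.ne]
  have hlo : (0.004356 : ℝ) < φ (0.122 + u) / deriv (deriv φ) (0.122 + u) := by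
    rw [hr, lt_div_iff_of_neg hB]
    linarith [Lo_neg hu0 hu1]
  have hhi : φ (0.122 + u) / deriv (deriv φ) (0.122 + u) < (0.004489 : ℝ) := by
    rw [hr, div_lt_iff_of_neg hB]
    linarith [Up_pos hu5 hu1]
  refine ⟨hpp, ?_, ?_⟩
  · rw [Real.lt_sqrt (by norm_num)]
    norm_num
    linarith
  · rw [Real.sqrt_lt' (by norm_num)]
    norm_num
    linarith
end

section
/- The function h(z) = φ(z) - z·φ'(z), where φ(z) = -4(z-1)⁶/(2z⁷ - 18z⁶ + 67z⁵ - 126z⁴ + 124z³ - 70z² + 30z - 4), is strictly decreasing on the interval (0, 0.13), and hence has at most one zero there. -/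
noncomputable section

/-- Denominator polynomial. -/
private def Dd (z : ℝ) : ℝ :=
  2*z^7 - 18*z^6 + 67*z^5 - 126*z^4 + 124*z^3 - 70*z^2 + 30*z - 4

/-- Derivative of denominator. -/
private def Dd' (z : ℝ) : ℝ :=
  14*z^6 - 108*z^5 + 335*z^4 - 504*z^3 + 372*z^2 - 140*z + 30

/-- Numerator of `h` written over `Dd^2`. -/
private def Qq (z : ℝ) : ℝ :=
  16 - 240*z + 1320*z^2 - 4704*z^3 + 12528*z^4 - 24600*z^5 + 34704*z^6 - 35056*z^7 + 25560*z^8 - 13528*z^9 + 5144*z^10 - 1344*z^11 + 216*z^12 - 16*z^13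

private def Qq' (z : ℝ) : ℝ :=
  -240 + 2640*z - 14112*z^2 + 50112*z^3 - 123000*z^4 + 208224*z^5 - 245392*z^6 + 204480*z^7 - 121752*z^8 + 51440*z^9 - 14784*z^10 + 2592*z^11 - 208*z^12

private def Ss (z : ℝ) : ℝ :=
  1120 - 5856*z + 8160*z^2 + 37280*z^3 - 150912*z^4 + 42096*z^5 + 879648*z^6 - 2679216*z^7 + 4343544*z^8 - 4700512*z^9 + 3670944*z^10 - 2155200*z^11 + 981672*z^12 - 358416*z^13 + 107664*z^14 - 26320*z^15 + 4848*z^16 - 576*z^17 + 32*z^18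

private lemma pow_chain {z : ℝ} (hz0 : 0 < z) (hz13 : z < 0.13) (k : ℕ) :
    z^(k+1) ≤ 0.13 * z^k := by
  have h := mul_le_mul_of_nonneg_left hz13.le (pow_nonneg hz0.le k)
  calc z^(k+1) = z^k * z := by ring
    _ ≤ z^k * 0.13 := h
    _ = 0.13 * z^k := by ring

private lemma Dd_neg {z : ℝ} (hz0 : 0 < z) (hz13 : z < 0.13) : Dd z < 0 := by
  have p1 := pow_chain hz0 hz13 0
  have p2 := pow_chain hz0 hz13 1
  have p3 := pow_chain hz0 hz13 2
  have p4 := pow_chain hz0 hz13 3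
  have p5 := pow_chain hz0 hz13 4
  have p6 := pow_chain hz0 hz13 5
  have p7 := pow_chain hz0 hz13 6
  have q1 : (0:ℝ) < z^1 := pow_pos hz0 1
  have q2 : (0:ℝ) < z^2 := pow_pos hz0 2
  have q3 : (0:ℝ) < z^3 := pow_pos hz0 3
  have q4 : (0:ℝ) < z^4 := pow_pos hz0 4
  have q5 : (0:ℝ) < z^5 := pow_pos hz0 5
  have q6 : (0:ℝ) < z^6 := pow_pos hz0 6
  have q7 : (0:ℝ) < z^7 := pow_pos hz0 7
  have hz1 : z^1 = z := pow_one z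
  unfold Dd
  nlinarith [p1, p2, p3, p4, p5, p6, p7, q1, q2, q3, q4, q5, q6, q7]

private lemma Ss_pos {z : ℝ} (hz0 : 0 < z) (hz13 : z < 0.13) : 0 < Ss z := by
  have p1 := pow_chain hz0 hz13 0
  have p2 := pow_chain hz0 hz13 1
  have p3 := pow_chain hz0 hz13 2
  have p4 := pow_chain hz0 hz13 3
  have p5 := pow_chain hz0 hz13 4
  have p6 := pow_chain hz0 hz13 5
  have p7 := pow_chain hz0 hz13 6
  have p8 := pow_chain hz0 hz13 7
  have p9 := pow_chain hz0 hz13 8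
  have p10 := pow_chain hz0 hz13 9
  have p11 := pow_chain hz0 hz13 10
  have p12 := pow_chain hz0 hz13 11
  have p13 := pow_chain hz0 hz13 12
  have p14 := pow_chain hz0 hz13 13
  have p15 := pow_chain hz0 hz13 14
  have p16 := pow_chain hz0 hz13 15
  have p17 := pow_chain hz0 hz13 16
  have p18 := pow_chain hz0 hz13 17
  have q2 : (0:ℝ) < z^2 := pow_pos hz0 2
  have q3 : (0:ℝ) < z^3 := pow_pos hz0 3
  have q5 : (0:ℝ) < z^5 := pow_pos hz0 5
  have q6 : (0:ℝ) < z^6 := pow_pos hz0 6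
  have q8 : (0:ℝ) < z^8 := pow_pos hz0 8
  have q10 : (0:ℝ) < z^10 := pow_pos hz0 10
  have q12 : (0:ℝ) < z^12 := pow_pos hz0 12
  have q14 : (0:ℝ) < z^14 := pow_pos hz0 14
  have q16 : (0:ℝ) < z^16 := pow_pos hz0 16
  have q18 : (0:ℝ) < z^18 := pow_pos hz0 18
  unfold Ss
  nlinarith [p1, p2, p3, p4, p5, p6, p7, p8, p9, p10, p11, p12, p13, p14, p15,
    p16, p17, p18, q2, q3, q5, q6, q8, q10, q12, q14, q16, q18]

private lemma hasDerivAt_Dd (z : ℝ) : HasDerivAt Dd (Dd' z) z := by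
  have h := ((((((((hasDerivAt_pow 7 z).const_mul (2:ℝ)).sub
    ((hasDerivAt_pow 6 z).const_mul (18:ℝ))).add
    ((hasDerivAt_pow 5 z).const_mul (67:ℝ))).sub
    ((hasDerivAt_pow 4 z).const_mul (126:ℝ))).add
    ((hasDerivAt_pow 3 z).const_mul (124:ℝ))).sub
    ((hasDerivAt_pow 2 z).const_mul (70:ℝ))).add
    ((hasDerivAt_pow 1 z).const_mul (30:ℝ))).sub_const (4:ℝ)
  have hfun : Dd = fun z : ℝ =>
      2*z^7 - 18*z^6 + 67*z^5 - 126*z^4 + 124*z^3 - 70*z^2 + 30*z^1 - 4 := by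
    funext t; unfold Dd; ring
  rw [hfun]
  refine h.congr_deriv ?_
  unfold Dd'
  push_cast
  ring

private lemma hasDerivAt_Qq (z : ℝ) : HasDerivAt Qq (Qq' z) z := by
  have h := (((((((((((((hasDerivAt_const z (16:ℝ)).sub
    ((hasDerivAt_pow 1 z).const_mul (240:ℝ))).add
    ((hasDerivAt_pow 2 z).const_mul (1320:ℝ))).sub
    ((hasDerivAt_pow 3 z).const_mul (4704:ℝ))).add
    ((hasDerivAt_pow 4 z).const_mul (12528:ℝ))).sub
    ((hasDerivAt_pow 5 z).const_mul (24600:ℝ))).add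
    ((hasDerivAt_pow 6 z).const_mul (34704:ℝ))).sub
    ((hasDerivAt_pow 7 z).const_mul (35056:ℝ))).add
    ((hasDerivAt_pow 8 z).const_mul (25560:ℝ))).sub
    ((hasDerivAt_pow 9 z).const_mul (13528:ℝ))).add
    ((hasDerivAt_pow 10 z).const_mul (5144:ℝ))).sub
    ((hasDerivAt_pow 11 z).const_mul (1344:ℝ))).add
    ((hasDerivAt_pow 12 z).const_mul (216:ℝ))).sub
    ((hasDerivAt_pow 13 z).const_mul (16:ℝ))
  have hfun : Qq = fun z : ℝ =>
      16 - 240*z^1 + 1320*z^2 - 4704*z^3 + 12528*z^4 - 24600*z^5 + 34704*z^6 - 35056*z^7 + 25560*z^8 - 13528*z^9 + 5144*z^10 - 1344*z^11 + 216*z^12 - 16*z^13 := by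
    funext t; unfold Qq; ring
  rw [hfun]
  refine h.congr_deriv ?_
  unfold Qq'
  push_cast
  ring

private lemma hasDerivAt_Nn (z : ℝ) :
    HasDerivAt (fun z : ℝ => -4*(z-1)^6) (-24*(z-1)^5) z := by
  have h := (((hasDerivAt_id z).sub_const (1:ℝ)).pow 6).const_mul (-4:ℝ)
  have hfun : (fun z : ℝ => -4*(z-1)^6) = fun z : ℝ => (-4:ℝ)*(z-1)^6 := by
    funext t; ring
  rw [hfun]
  refine h.congr_deriv ?_
  simp only [id_eq]
  push_cast
  ring

/-- The function `h(z) = φ(z) - z·φ'(z)`, where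
`φ(z) = -4(z-1)⁶/(2z⁷ - 18z⁶ + 67z⁵ - 126z⁴ + 124z³ - 70z² + 30z - 4)`, is
strictly decreasing on `(0, 0.13)`, and hence has at most one zero there. -/
theorem h_strictAnti_and_unique_zero (φ h : ℝ → ℝ)
    (hφ : ∀ z : ℝ, φ z = (-4*(z-1)^6) /
      (2*z^7 - 18*z^6 + 67*z^5 - 126*z^4 + 124*z^3 - 70*z^2 + 30*z - 4))
    (hh : ∀ z : ℝ, h z = φ z - z * deriv φ z) :
    StrictAntiOn h (Set.Ioo (0 : ℝ) 0.13) ∧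
      ∀ a ∈ Set.Ioo (0 : ℝ) 0.13, ∀ b ∈ Set.Ioo (0 : ℝ) 0.13,
        h a = 0 → h b = 0 → a = b := by
  have hφfun : φ = fun z : ℝ => (-4*(z-1)^6) / Dd z := by
    funext t; rw [hφ t]; rfl
  -- pointwise formula for h where Dd ≠ 0
  have hpt : ∀ t : ℝ, Dd t ≠ 0 → h t = Qq t / (Dd t)^2 := by
    intro t hne
    have hdφ : HasDerivAt φ
        ((-24*(t-1)^5 * Dd t - (-4*(t-1)^6) * Dd' t) / (Dd t)^2) t := by
      rw [hφfun]
      exact (hasDerivAt_Nn t).div (hasDerivAt_Dd t) hne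
    have hDD : (2*t^7 - 18*t^6 + 67*t^5 - 126*t^4 + 124*t^3 - 70*t^2 + 30*t - 4) = Dd t := rfl
    rw [hh t, hφ t, hdφ.deriv, hDD]
    field_simp
    unfold Dd Dd' Qq
    ring
  -- h has negative derivative on the open interval
  have key : ∀ t ∈ Set.Ioo (0:ℝ) 0.13, DifferentiableAt ℝ h t ∧ deriv h t < 0 := by
    intro t ht
    obtain ⟨ht0, ht13⟩ := ht
    have hDneg : Dd t < 0 := Dd_neg ht0 ht13
    have hne : Dd t ≠ 0 := ne_of_lt hDneg
    have hq : HasDerivAt (fun z : ℝ => Qq z / (Dd z)^2)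
        ((Qq' t * (Dd t)^2 - Qq t * ((2:ℕ) * Dd t ^ (2-1) * Dd' t)) / ((Dd t)^2)^2) t :=
      (hasDerivAt_Qq t).div ((hasDerivAt_Dd t).pow 2) (pow_ne_zero 2 hne)
    have hev : h =ᶠ[nhds t] fun z : ℝ => Qq z / (Dd z)^2 := by
      filter_upwards [isOpen_Ioo.mem_nhds (⟨ht0, ht13⟩ : t ∈ Set.Ioo (0:ℝ) 0.13)]
        with u hu
      exact hpt u (ne_of_lt (Dd_neg hu.1 hu.2))
    have hh' : HasDerivAt h
        ((Qq' t * (Dd t)^2 - Qq t * ((2:ℕ) * Dd t ^ (2-1) * Dd' t)) / ((Dd t)^2)^2) t :=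
      hq.congr_of_eventuallyEq hev
    refine ⟨hh'.differentiableAt, ?_⟩
    rw [hh'.deriv]
    apply div_neg_of_neg_of_pos
    · have hnum : Qq' t * (Dd t)^2 - Qq t * ((2:ℕ) * Dd t ^ (2-1) * Dd' t)
          = Dd t * (t * Ss t) := by
        unfold Dd Dd' Qq Qq' Ss
        push_cast
        ring
      rw [hnum]
      exact mul_neg_of_neg_of_pos hDneg (mul_pos ht0 (Ss_pos ht0 ht13))
    · positivity
  have hanti : StrictAntiOn h (Set.Ioo (0:ℝ) 0.13) := by
    apply strictAntiOn_of_deriv_neg (convex_Ioo _ _)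
    · exact fun t ht => ((key t ht).1.continuousAt).continuousWithinAt
    · rw [interior_Ioo]
      exact fun t ht => (key t ht).2
  exact ⟨hanti, fun a ha b hb ha0 hb0 =>
    hanti.injOn ha hb (by rw [ha0, hb0])⟩

end
end
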